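/- For every admissible sequence S, the Lie algebras n(S) and n(C) are nilpotent, and the nilpotency degree of n(S) is greater than or equal to the nilpotency degree of n(C). -/

import Mathlib

open scoped Classical

noncomputable section

namespace Paper

variable {F : Type*}

attribute [local instance] LieRing.ofAssociativeRing

/-- Offset (starting global index) of the `i`-th block. -/
def off {k : ℕ} (dv : Fin k → ℕ) (i : Fin k) : ℕ := ∑ t ∈ Finset.Iio i, dv t

/-- Total size `d = d₁ + ⋯ + d_k`. -/
def dtot {k : ℕ} (dv : Fin k → ℕ) : ℕ := ∑ t, dv t

theorem off_add_lt {k : ℕ} (dv : Fin k → ℕ) (i : Fin k) (r : Fin (dv i)) :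
    off dv i + (r : ℕ) < dtot dv := by
  have h1 : off dv i + dv i ≤ dtot dv := by
    have h : off dv i + dv i = ∑ t ∈ insert i (Finset.Iio i), dv t := by
      rw [Finset.sum_insert (by simp), add_comm]
      rfl
    rw [h]
    exact Finset.sum_le_sum_of_subset (Finset.subset_univ _)
  have := r.isLt
  omega

/-- The global index of the `r`-th row/column of the `i`-th block. -/
def emb {k : ℕ} (dv : Fin k → ℕ) (i : Fin k) (r : Fin (dv i)) : Fin (dtot dv) :=
  ⟨off dv i + r, off_add_lt dv i r⟩

/-- The projection `p_{i,j}` onto the `(i,j)`-block. -/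
def blk {k : ℕ} (dv : Fin k → ℕ) (i j : Fin k)
    (A : Matrix (Fin (dtot dv)) (Fin (dtot dv)) F) :
    Matrix (Fin (dv i)) (Fin (dv j)) F :=
  Matrix.of fun r s => A (emb dv i r) (emb dv j s)

/-- The `p × p` upper triangular Jordan block `J^p(α)`. -/
def Jord [Field F] (p : ℕ) (α : F) : Matrix (Fin p) (Fin p) F :=
  Matrix.of fun a b =>
    if (b : ℕ) = (a : ℕ) then α else if (b : ℕ) = (a : ℕ) + 1 then 1 else 0

/-- The matrix whose `(i,j)` block is `M` and all other blocks vanish. -/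
def embMat [Field F] {k : ℕ} (dv : Fin k → ℕ) (i j : Fin k)
    (M : Matrix (Fin (dv i)) (Fin (dv j)) F) :
    Matrix (Fin (dtot dv)) (Fin (dtot dv)) F :=
  Matrix.of fun x y => ∑ r, ∑ s, if x = emb dv i r ∧ y = emb dv j s then M r s else 0

/-- The block diagonal matrix `D(α,λ) = J^{d₁}(α) ⊕ J^{d₂}(α-λ) ⊕ ⋯ ⊕ J^{d_k}(α-(k-1)λ)`. -/
def Dmat [Field F] {k : ℕ} (dv : Fin k → ℕ) (α lam : F) :
    Matrix (Fin (dtot dv)) (Fin (dtot dv)) F :=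
  ∑ i : Fin k, embMat dv i i (Jord (dv i) (α - ((i : ℕ) : F) * lam))

/-- `A` is the matrix `E(S)` of an admissible sequence `S`:  all blocks vanish except the
blocks `p_{i,i+1}`, and each block `p_{i,i+1}` has nonzero lower-left (i.e. `(dᵢ,1)`) entry. -/
def IsEShaped [Field F] {k : ℕ} (dv : Fin k → ℕ)
    (A : Matrix (Fin (dtot dv)) (Fin (dtot dv)) F) : Prop :=
  (∀ i j : Fin k, (j : ℕ) ≠ (i : ℕ) + 1 → blk dv i j A = 0) ∧
  (∀ i j : Fin k, (j : ℕ) = (i : ℕ) + 1 →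
    ∀ (hr : dv i - 1 < dv i) (hs : 0 < dv j),
      A (emb dv i ⟨dv i - 1, hr⟩) (emb dv j ⟨0, hs⟩) ≠ 0)

/-- The matrix `E(C)` of the canonical sequence `C`. -/
def CanE (F : Type*) [Field F] {k : ℕ} (dv : Fin k → ℕ) :
    Matrix (Fin (dtot dv)) (Fin (dtot dv)) F :=
  Matrix.of fun x y =>
    if ∃ i j : Fin k, (j : ℕ) = (i : ℕ) + 1 ∧
        (x : ℕ) = off dv i + (dv i - 1) ∧ (y : ℕ) = off dv j
    then 1 else 0

/-- The Lie subalgebra `h(α,λ,S)` of `gl(d,F)` generated by `D(α,λ)` and `E(S) = A`. -/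
def hAlg (F : Type*) [Field F] {k : ℕ} (dv : Fin k → ℕ) (α lam : F)
    (A : Matrix (Fin (dtot dv)) (Fin (dtot dv)) F) :
    LieSubalgebra F (Matrix (Fin (dtot dv)) (Fin (dtot dv)) F) :=
  LieSubalgebra.lieSpan F _ {Dmat dv α lam, A}

/-- The Lie subalgebra `n(S)` generated by the matrices `(ad D(0,0))^l (E(S))`, `l ≥ 0`. -/
def nAlg (F : Type*) [Field F] {k : ℕ} (dv : Fin k → ℕ)
    (A : Matrix (Fin (dtot dv)) (Fin (dtot dv)) F) :
    LieSubalgebra F (Matrix (Fin (dtot dv)) (Fin (dtot dv)) F) :=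
  LieSubalgebra.lieSpan F _ {X | ∃ l : ℕ, X = (fun Y => ⁅Dmat dv (0 : F) 0, Y⁆)^[l] A}

/-- `r_{i,j}`:  `0` if the `(i,j)`-blocks of all members of `h(0,0,C)` vanish, and otherwise
the minimal rank of a nonzero `(i,j)`-block of a member of `h(0,0,C)`. -/
def rr (F : Type*) [Field F] {k : ℕ} (dv : Fin k → ℕ) (i j : Fin k) : ℕ :=
  if ∀ X ∈ hAlg F dv 0 0 (CanE F dv), blk dv i j X = 0 then 0
  else sInf {n | ∃ X ∈ hAlg F dv 0 0 (CanE F dv),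
    blk dv i j X ≠ 0 ∧ (blk dv i j X).rank = n}

/-- The automorphism `φ(A)_{i,j} = (−1)^{i−j+1} A_{d+1−j,d+1−i}` (here written 0-indexed). -/
def Phi (F : Type*) [Field F] (d : ℕ) (A : Matrix (Fin d) (Fin d) F) :
    Matrix (Fin d) (Fin d) F :=
  Matrix.of fun x y =>
    (-1 : F) ^ ((x : ℕ) + (y : ℕ) + 1) *
      A ⟨d - 1 - (y : ℕ), by have := y.isLt; omega⟩ ⟨d - 1 - (x : ℕ), by have := x.isLt; omega⟩

/-- `d⃗` is symmetric: `dᵢ = d_{k+1−i}` for all `i` (0-indexed: `dᵢ = d_{k-1-i}`). -/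
def SymmSeq {k : ℕ} (dv : Fin k → ℕ) : Prop :=
  ∀ i j : Fin k, (i : ℕ) + (j : ℕ) = k - 1 → dv i = dv j

/-- `d⃗` is odd-symmetric: symmetric, `k` odd and the middle `d_{(k+1)/2}` odd. -/
def OddSymmSeq {k : ℕ} (dv : Fin k → ℕ) : Prop :=
  SymmSeq dv ∧ Odd k ∧ ∀ i : Fin k, 2 * (i : ℕ) = k - 1 → Odd (dv i)

/-- Conditions (1) and (2) of Definition `Normalized` (weak normalization), expressed on the
matrix `A = E(S)`, so that `S(i)_{a,b} = A (emb i a) (emb (i+1) b)` (0-indexed). -/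
def IsWeaklyNormalized [Field F] {k : ℕ} (dv : Fin k → ℕ)
    (A : Matrix (Fin (dtot dv)) (Fin (dtot dv)) F) : Prop :=
  (∀ i j : Fin k, (j : ℕ) = (i : ℕ) + 1 →
      ∀ (hr : dv i - 1 < dv i) (hs : 0 < dv j),
        A (emb dv i ⟨dv i - 1, hr⟩) (emb dv j ⟨0, hs⟩) = 1) ∧
  (∀ i j l : Fin k, (j : ℕ) = (i : ℕ) + 1 → (l : ℕ) = (j : ℕ) + 1 →
      ∀ (hr : dv i - 1 < dv i) (s : Fin (dv j)) (hs : dv j - 1 - (s : ℕ) < dv j)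
        (h0 : 0 < dv l),
        A (emb dv i ⟨dv i - 1, hr⟩) (emb dv j s) =
          A (emb dv j ⟨dv j - 1 - (s : ℕ), hs⟩) (emb dv l ⟨0, h0⟩))

/-- The sequence `S` (given through its matrix `A = E(S)`) is normalized. -/
def IsNormalized [Field F] {k : ℕ} (dv : Fin k → ℕ)
    (A : Matrix (Fin (dtot dv)) (Fin (dtot dv)) F) : Prop :=
  IsWeaklyNormalized dv A ∧
  (∀ i j : Fin k, (i : ℕ) = 0 → (j : ℕ) = 1 →
      ∀ (r : Fin (dv i)) (hs : 0 < dv j), (r : ℕ) ≠ dv i - 1 →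
        A (emb dv i r) (emb dv j ⟨0, hs⟩) = 0) ∧
  (∀ i j : Fin k, (j : ℕ) = (i : ℕ) + 1 → (j : ℕ) = k - 1 →
      ∀ (hr : dv i - 1 < dv i) (s : Fin (dv j)), (s : ℕ) ≠ 0 →
        A (emb dv i ⟨dv i - 1, hr⟩) (emb dv j s) = 0)

/-- Membership in the group `G(d⃗)`: a block diagonal matrix each of whose diagonal blocks is
a polynomial with nonzero constant term evaluated at `J^{dᵢ}(0)`. -/
def InG (F : Type*) [Field F] {k : ℕ} (dv : Fin k → ℕ)
    (P : Matrix (Fin (dtot dv)) (Fin (dtot dv)) F) : Prop :=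
  IsUnit P ∧ ∃ q : Fin k → Polynomial F, (∀ i, (q i).coeff 0 ≠ 0) ∧
    P = ∑ i : Fin k, embMat dv i i (Polynomial.aeval (Jord (dv i) (0 : F)) (q i))

/-- The nilpotency degree of a Lie algebra: the least `m` with `L^m = 0` in the lower central
series `L^0 = L`, `L^{i+1} = [L, L^i]`. -/
def nilDeg (F : Type*) (L : Type*) [Field F] [LieRing L] [LieAlgebra F L] : ℕ :=
  sInf {m | LieModule.lowerCentralSeries F L L m = ⊥}


/-! ### Auxiliary development -/

section Dev

variable {k : ℕ} (dv : Fin k → ℕ)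

lemma off_add_eq (i : Fin k) : off dv i + dv i = ∑ t ∈ Finset.Iic i, dv t := by
  rw [off, add_comm, ← Finset.sum_insert (by simp)]
  congr 1
  ext t
  simp only [Finset.mem_insert, Finset.mem_Iio, Finset.mem_Iic, Fin.lt_def, Fin.le_def,
    Fin.ext_iff]
  omega

lemma off_add_le_off {t i : Fin k} (h : (t : ℕ) < (i : ℕ)) : off dv t + dv t ≤ off dv i := by
  rw [off_add_eq, off]
  refine Finset.sum_le_sum_of_subset ?_
  intro s hs
  simp only [Finset.mem_Iic, Finset.mem_Iio, Fin.le_def, Fin.lt_def] at *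
  omega

lemma off_add_le_off_add {i t : Fin k} (h : (i : ℕ) ≤ (t : ℕ)) :
    off dv i + dv i ≤ off dv t + dv t := by
  rw [off_add_eq, off_add_eq]
  refine Finset.sum_le_sum_of_subset ?_
  intro s hs
  simp only [Finset.mem_Iic, Fin.le_def] at *
  omega

/-- Index of the block containing global index `x`. -/
def bidx (x : ℕ) : ℕ := (Finset.univ.filter fun t : Fin k => off dv t + dv t ≤ x).card

lemma emb_val (i : Fin k) (r : Fin (dv i)) : ((emb dv i r : Fin (dtot dv)) : ℕ) = off dv i + r :=
  rfl

lemma bidx_emb (i : Fin k) (r : Fin (dv i)) :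
    bidx dv ((emb dv i r : Fin (dtot dv)) : ℕ) = (i : ℕ) := by
  rw [bidx, emb_val]
  have hset : (Finset.univ.filter fun t : Fin k => off dv t + dv t ≤ off dv i + r)
      = Finset.Iio i := by
    ext t
    simp only [Finset.mem_filter, Finset.mem_univ, true_and, Finset.mem_Iio]
    constructor
    · intro h
      rcases lt_or_ge t i with h' | h'
      · exact h'
      · exfalso
        have h2 := off_add_le_off_add dv (show (i : ℕ) ≤ (t : ℕ) from h')
        have := r.isLt
        omega
    · intro h
      have := off_add_le_off dv (show (t : ℕ) < (i : ℕ) from h)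
      omega
  rw [hset, Fin.card_Iio]

lemma emb_right_inj {i : Fin k} {r s : Fin (dv i)} (h : emb dv i r = emb dv i s) : r = s := by
  have := congrArg (fun x : Fin (dtot dv) => (x : ℕ)) h
  simp only [emb_val] at this
  exact Fin.ext (by omega)

lemma emb_block_eq {i j : Fin k} {r : Fin (dv i)} {s : Fin (dv j)}
    (h : emb dv i r = emb dv j s) : i = j := by
  have h1 := bidx_emb dv i r
  have h2 := bidx_emb dv j s
  rw [h] at h1
  exact Fin.ext (h1.symm.trans h2)

lemma off_succ {i j : Fin k} (h : (j : ℕ) = (i : ℕ) + 1) : off dv j = off dv i + dv i := by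
  rw [off_add_eq, off]
  congr 1
  ext t
  simp only [Finset.mem_Iio, Finset.mem_Iic, Fin.lt_def, Fin.le_def]
  omega

lemma exists_emb (hk : 0 < k) (hdv : ∀ i, 0 < dv i) (x : Fin (dtot dv)) :
    ∃ (i : Fin k) (r : Fin (dv i)), x = emb dv i r := by
  classical
  set s : Finset (Fin k) := Finset.univ.filter fun t => off dv t ≤ (x : ℕ) with hs
  have hzero : off dv (⟨0, hk⟩ : Fin k) = 0 := by
    rw [off]
    have : Finset.Iio (⟨0, hk⟩ : Fin k) = ∅ := by
      ext t; simp [Fin.lt_def]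
    rw [this, Finset.sum_empty]
  have hne : s.Nonempty := ⟨⟨0, hk⟩, by simp [hs, hzero]⟩
  set i := s.max' hne with hi
  have himem : i ∈ s := s.max'_mem hne
  have hle : off dv i ≤ (x : ℕ) := by
    simpa [hs] using himem
  have hlt : (x : ℕ) < off dv i + dv i := by
    by_contra hge
    push_neg at hge
    rcases Nat.lt_or_ge ((i : ℕ) + 1) k with h | h
    · have hmem : (⟨(i : ℕ) + 1, h⟩ : Fin k) ∈ s := by
        simp only [hs, Finset.mem_filter, Finset.mem_univ, true_and]
        rw [off_succ dv (show ((⟨(i : ℕ) + 1, h⟩ : Fin k) : ℕ) = (i : ℕ) + 1 from rfl)]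
        exact hge
      have := s.le_max' _ hmem
      rw [← hi] at this
      have := Fin.le_def.mp this
      simp at this
    · have huniv : (Finset.univ : Finset (Fin k)) = Finset.Iic i := by
        ext t
        simp only [Finset.mem_univ, Finset.mem_Iic, Fin.le_def, true_iff]
        have := t.isLt
        omega
      have hd : dtot dv ≤ (x : ℕ) := by
        have hdt : dtot dv = off dv i + dv i := by
          rw [off_add_eq, ← huniv]; rfl
        omega
      exact absurd x.isLt (by omega)
  refine ⟨i, ⟨(x : ℕ) - off dv i, by omega⟩, ?_⟩
  apply Fin.ext
  show (x : ℕ) = off dv i + ((x : ℕ) - off dv i)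
  omega

end Dev
section Dev2

variable {F : Type*} [Field F] {k : ℕ} (dv : Fin k → ℕ)

lemma embMat_apply (i j : Fin k) (M : Matrix (Fin (dv i)) (Fin (dv j)) F)
    (r : Fin (dv i)) (s : Fin (dv j)) :
    embMat dv i j M (emb dv i r) (emb dv j s) = M r s := by
  rw [embMat, Matrix.of_apply]
  rw [Finset.sum_eq_single r]
  · rw [Finset.sum_eq_single s]
    · rw [if_pos ⟨rfl, rfl⟩]
    · intro s' _ hs'
      rw [if_neg]
      rintro ⟨-, h2⟩
      exact hs' (emb_right_inj dv h2).symm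
    · intro h; exact absurd (Finset.mem_univ s) h
  · intro r' _ hr'
    apply Finset.sum_eq_zero
    intro s' _
    rw [if_neg]
    rintro ⟨h1, -⟩
    exact hr' (emb_right_inj dv h1).symm
  · intro h; exact absurd (Finset.mem_univ r) h

lemma embMat_apply_zero_row (i j : Fin k) (M : Matrix (Fin (dv i)) (Fin (dv j)) F)
    (x y : Fin (dtot dv)) (h : bidx dv (x : ℕ) ≠ (i : ℕ)) : embMat dv i j M x y = 0 := by
  rw [embMat, Matrix.of_apply]
  apply Finset.sum_eq_zero
  intro r _
  apply Finset.sum_eq_zero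
  intro s _
  rw [if_neg]
  rintro ⟨h1, -⟩
  exact h (by rw [h1, bidx_emb])

lemma embMat_apply_zero_col (i j : Fin k) (M : Matrix (Fin (dv i)) (Fin (dv j)) F)
    (x y : Fin (dtot dv)) (h : bidx dv (y : ℕ) ≠ (j : ℕ)) : embMat dv i j M x y = 0 := by
  rw [embMat, Matrix.of_apply]
  apply Finset.sum_eq_zero
  intro r _
  apply Finset.sum_eq_zero
  intro s _
  rw [if_neg]
  rintro ⟨-, h2⟩
  exact h (by rw [h2, bidx_emb])

lemma Dmat_apply_emb_same (α lam : F) (i : Fin k) (r s : Fin (dv i)) :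
    Dmat dv α lam (emb dv i r) (emb dv i s) = Jord (dv i) (α - ((i : ℕ) : F) * lam) r s := by
  rw [Dmat, Matrix.sum_apply]
  rw [Finset.sum_eq_single i]
  · exact embMat_apply dv i i _ r s
  · intro t _ ht
    apply embMat_apply_zero_row
    rw [bidx_emb]
    intro hh
    exact ht (Fin.ext hh.symm)
  · intro h; exact absurd (Finset.mem_univ i) h

lemma Dmat_apply_emb_ne (α lam : F) {i j : Fin k} (h : i ≠ j) (r : Fin (dv i))
    (s : Fin (dv j)) : Dmat dv α lam (emb dv i r) (emb dv j s) = 0 := by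
  rw [Dmat, Matrix.sum_apply]
  apply Finset.sum_eq_zero
  intro t _
  by_cases ht : (t : ℕ) = (i : ℕ)
  · apply embMat_apply_zero_col
    rw [bidx_emb]
    intro hh
    exact h (Fin.ext (by omega))
  · apply embMat_apply_zero_row
    rw [bidx_emb]
    exact fun hh => ht hh.symm

/-- Workhorse: a nonzero entry of `D(0,0)` is a within-block superdiagonal entry. -/
lemma D_entry (hk : 0 < k) (hdv : ∀ i, 0 < dv i) {x y : Fin (dtot dv)}
    (h : Dmat dv (0 : F) 0 x y ≠ 0) :
    ∃ (i : Fin k) (a b : Fin (dv i)), x = emb dv i a ∧ y = emb dv i b ∧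
      (b : ℕ) = (a : ℕ) + 1 := by
  obtain ⟨i, a, rfl⟩ := exists_emb dv hk hdv x
  obtain ⟨j, b, rfl⟩ := exists_emb dv hk hdv y
  by_cases hij : i = j
  · subst hij
    rw [Dmat_apply_emb_same] at h
    rw [Jord, Matrix.of_apply] at h
    by_cases h1 : (b : ℕ) = (a : ℕ)
    · rw [if_pos h1] at h
      simp at h
    · rw [if_neg h1] at h
      by_cases h2 : (b : ℕ) = (a : ℕ) + 1
      · exact ⟨i, a, b, rfl, rfl, h2⟩
      · rw [if_neg h2] at h
        simp at h
  · exact absurd (Dmat_apply_emb_ne dv _ _ hij a b) h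

lemma blk_apply (i j : Fin k) (A : Matrix (Fin (dtot dv)) (Fin (dtot dv)) F)
    (r : Fin (dv i)) (s : Fin (dv j)) :
    blk dv i j A r s = A (emb dv i r) (emb dv j s) := rfl

/-- Workhorse: a nonzero entry of an E-shaped matrix lies in a block `(i, i+1)`. -/
lemma E_entry (hk : 0 < k) (hdv : ∀ i, 0 < dv i)
    {A : Matrix (Fin (dtot dv)) (Fin (dtot dv)) F} (hA : IsEShaped dv A)
    {x y : Fin (dtot dv)} (h : A x y ≠ 0) :
    ∃ (i j : Fin k) (a : Fin (dv i)) (b : Fin (dv j)),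
      x = emb dv i a ∧ y = emb dv j b ∧ (j : ℕ) = (i : ℕ) + 1 := by
  obtain ⟨i, a, rfl⟩ := exists_emb dv hk hdv x
  obtain ⟨j, b, rfl⟩ := exists_emb dv hk hdv y
  by_cases hij : (j : ℕ) = (i : ℕ) + 1
  · exact ⟨i, j, a, b, rfl, rfl, hij⟩
  · exfalso
    apply h
    calc A (emb dv i a) (emb dv j b) = blk dv i j A a b := rfl
      _ = 0 := by rw [hA.1 i j hij]; rfl

/-- The weight of a global index. -/
def wt (x : Fin (dtot dv)) : ℤ := (bidx dv (x : ℕ) : ℤ) - (x : ℕ)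

lemma wt_emb (i : Fin k) (r : Fin (dv i)) :
    wt dv (emb dv i r) = (i : ℤ) - ((off dv i : ℤ) + (r : ℕ)) := by
  rw [wt, bidx_emb, emb_val]
  push_cast
  ring

lemma wt_superdiag {i j : Fin k} (hij : (j : ℕ) = (i : ℕ) + 1) (a : Fin (dv i))
    (b : Fin (dv j)) :
    wt dv (emb dv j b) - wt dv (emb dv i a) = (a : ℤ) + 1 - (dv i : ℤ) - (b : ℕ) := by
  rw [wt_emb, wt_emb, off_succ dv hij]
  have hji : ((j : ℕ) : ℤ) = ((i : ℕ) : ℤ) + 1 := by exact_mod_cast hij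
  push_cast
  omega

lemma wt_sameblock {i : Fin k} (a b : Fin (dv i)) :
    wt dv (emb dv i b) - wt dv (emb dv i a) = (a : ℤ) - (b : ℕ) := by
  rw [wt_emb, wt_emb]
  ring

end Dev2
section Dev3

variable {F : Type*} [Field F] {k : ℕ} (dv : Fin k → ℕ)

/-- Matrices vanishing on and below the `m`-shifted diagonal. -/
def Upp (m : ℕ) : Submodule F (Matrix (Fin (dtot dv)) (Fin (dtot dv)) F) where
  carrier := {X | ∀ x y : Fin (dtot dv), (y : ℕ) ≤ (x : ℕ) + m → X x y = 0}
  add_mem' := fun ha hb x y h => by rw [Matrix.add_apply, ha x y h, hb x y h, add_zero]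
  zero_mem' := fun x y _ => rfl
  smul_mem' := fun c X hX x y h => by rw [Matrix.smul_apply, hX x y h, smul_zero]

lemma Upp_anti {m n : ℕ} (h : m ≤ n) : (Upp dv n : Submodule F _) ≤ Upp dv m :=
  fun X hX x y hxy => hX x y (by omega)

lemma Upp_mul_left {m : ℕ} {X Y : Matrix (Fin (dtot dv)) (Fin (dtot dv)) F}
    (hX : X ∈ (Upp dv 0 : Submodule F _)) (hY : Y ∈ (Upp dv m : Submodule F _)) :
    X * Y ∈ (Upp dv (m + 1) : Submodule F _) := by
  intro x y hxy
  rw [Matrix.mul_apply]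
  apply Finset.sum_eq_zero
  intro t _
  by_cases ht : (t : ℕ) ≤ (x : ℕ)
  · rw [hX x t (by omega), zero_mul]
  · rw [hY t y (by omega), mul_zero]

lemma Upp_mul_right {m : ℕ} {X Y : Matrix (Fin (dtot dv)) (Fin (dtot dv)) F}
    (hX : X ∈ (Upp dv 0 : Submodule F _)) (hY : Y ∈ (Upp dv m : Submodule F _)) :
    Y * X ∈ (Upp dv (m + 1) : Submodule F _) := by
  intro x y hxy
  rw [Matrix.mul_apply]
  apply Finset.sum_eq_zero
  intro t _
  by_cases ht : (t : ℕ) ≤ (x : ℕ) + m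
  · rw [hY x t (by omega), zero_mul]
  · rw [hX t y (by omega), mul_zero]

lemma Upp_lie {m : ℕ} {X Y : Matrix (Fin (dtot dv)) (Fin (dtot dv)) F}
    (hX : X ∈ (Upp dv 0 : Submodule F _)) (hY : Y ∈ (Upp dv m : Submodule F _)) :
    ⁅X, Y⁆ ∈ (Upp dv (m + 1) : Submodule F _) := by
  rw [Ring.lie_def]
  exact sub_mem (Upp_mul_left dv hX hY) (Upp_mul_right dv hX hY)

lemma Upp_bot (hd : 1 ≤ dtot dv) : (Upp dv (dtot dv - 1) : Submodule F _) = ⊥ := by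
  rw [eq_bot_iff]
  intro X hX
  rw [Submodule.mem_bot]
  ext x y
  rw [Matrix.zero_apply]
  exact hX x y (by have := y.isLt; omega)

/-- Filtration: matrices with entries only in weight-degrees `≤ c`. -/
def Fil (c : ℤ) : Submodule F (Matrix (Fin (dtot dv)) (Fin (dtot dv)) F) where
  carrier := {X | ∀ x y : Fin (dtot dv), c < wt dv y - wt dv x → X x y = 0}
  add_mem' := fun ha hb x y h => by rw [Matrix.add_apply, ha x y h, hb x y h, add_zero]
  zero_mem' := fun x y _ => rfl
  smul_mem' := fun c X hX x y h => by rw [Matrix.smul_apply, hX x y h, smul_zero]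

lemma Fil_mul {a b : ℤ} {X Y : Matrix (Fin (dtot dv)) (Fin (dtot dv)) F}
    (hX : X ∈ (Fil dv a : Submodule F _)) (hY : Y ∈ (Fil dv b : Submodule F _)) :
    X * Y ∈ (Fil dv (a + b) : Submodule F _) := by
  intro x y hxy
  rw [Matrix.mul_apply]
  apply Finset.sum_eq_zero
  intro t _
  by_cases ht : wt dv t - wt dv x ≤ a
  · rw [hY t y (by omega), mul_zero]
  · rw [hX x t (by omega), zero_mul]

lemma Fil_lie {a b : ℤ} {X Y : Matrix (Fin (dtot dv)) (Fin (dtot dv)) F}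
    (hX : X ∈ (Fil dv a : Submodule F _)) (hY : Y ∈ (Fil dv b : Submodule F _)) :
    ⁅X, Y⁆ ∈ (Fil dv (a + b) : Submodule F _) := by
  rw [Ring.lie_def]
  refine sub_mem (Fil_mul dv hX hY) ?_
  rw [show a + b = b + a by ring]
  exact Fil_mul dv hY hX

/-- Projection onto the degree-`c` graded component. -/
def pj (c : ℤ) (X : Matrix (Fin (dtot dv)) (Fin (dtot dv)) F) :
    Matrix (Fin (dtot dv)) (Fin (dtot dv)) F :=
  Matrix.of fun x y => if wt dv y - wt dv x = c then X x y else 0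

lemma pj_apply (c : ℤ) (X : Matrix (Fin (dtot dv)) (Fin (dtot dv)) F)
    (x y : Fin (dtot dv)) :
    pj dv c X x y = if wt dv y - wt dv x = c then X x y else 0 := rfl

lemma pj_zero (c : ℤ) : pj dv c (0 : Matrix (Fin (dtot dv)) (Fin (dtot dv)) F) = 0 := by
  ext x y
  simp [pj_apply]

lemma pj_sub (c : ℤ) (X Y : Matrix (Fin (dtot dv)) (Fin (dtot dv)) F) :
    pj dv c (X - Y) = pj dv c X - pj dv c Y := by
  ext x y
  simp only [pj_apply, Matrix.sub_apply]
  split <;> simp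

lemma pj_mem_Fil (c : ℤ) (X : Matrix (Fin (dtot dv)) (Fin (dtot dv)) F) :
    pj dv c X ∈ (Fil dv c : Submodule F _) := by
  intro x y h
  rw [pj_apply, if_neg (by omega)]

lemma pj_mul {a b : ℤ} {X Y : Matrix (Fin (dtot dv)) (Fin (dtot dv)) F}
    (hX : X ∈ (Fil dv a : Submodule F _)) (hY : Y ∈ (Fil dv b : Submodule F _)) :
    pj dv (a + b) (X * Y) = pj dv a X * pj dv b Y := by
  ext x y
  rw [pj_apply, Matrix.mul_apply, Matrix.mul_apply]
  by_cases h : wt dv y - wt dv x = a + b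
  · rw [if_pos h]
    apply Finset.sum_congr rfl
    intro t _
    by_cases h1 : wt dv t - wt dv x = a
    · rw [pj_apply, pj_apply, if_pos h1, if_pos (by omega)]
    · rw [pj_apply, pj_apply, if_neg h1, zero_mul]
      rcases lt_or_gt_of_ne h1 with h2 | h2
      · rw [hY t y (by omega), mul_zero]
      · rw [hX x t h2, zero_mul]
  · rw [if_neg h]
    symm
    apply Finset.sum_eq_zero
    intro t _
    rw [pj_apply, pj_apply]
    by_cases h1 : wt dv t - wt dv x = a
    · rw [if_neg (show ¬ wt dv y - wt dv t = b by omega), mul_zero]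
    · rw [if_neg h1, zero_mul]

lemma pj_lie {a b : ℤ} {X Y : Matrix (Fin (dtot dv)) (Fin (dtot dv)) F}
    (hX : X ∈ (Fil dv a : Submodule F _)) (hY : Y ∈ (Fil dv b : Submodule F _)) :
    pj dv (a + b) ⁅X, Y⁆ = ⁅pj dv a X, pj dv b Y⁆ := by
  rw [Ring.lie_def, Ring.lie_def, pj_sub, pj_mul dv hX hY]
  congr 1
  rw [show a + b = b + a by ring, pj_mul dv hY hX]

end Dev3
section Dev4

variable {F : Type*} [Field F] {k : ℕ} (dv : Fin k → ℕ)

lemma D_mem_Upp0 (hk : 0 < k) (hdv : ∀ i, 0 < dv i) :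
    Dmat dv (0 : F) 0 ∈ (Upp dv 0 : Submodule F _) := by
  intro x y hxy
  by_contra hne
  obtain ⟨i, a, b, rfl, rfl, hb⟩ := D_entry dv hk hdv hne
  rw [emb_val, emb_val] at hxy
  omega

lemma D_mem_Fil (hk : 0 < k) (hdv : ∀ i, 0 < dv i) :
    Dmat dv (0 : F) 0 ∈ (Fil dv (-1) : Submodule F _) := by
  intro x y hxy
  by_contra hne
  obtain ⟨i, a, b, rfl, rfl, hb⟩ := D_entry dv hk hdv hne
  rw [wt_sameblock] at hxy
  omega

lemma pj_D (hk : 0 < k) (hdv : ∀ i, 0 < dv i) :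
    pj dv (-1) (Dmat dv (0 : F) 0) = Dmat dv (0 : F) 0 := by
  ext x y
  rw [pj_apply]
  by_cases h : wt dv y - wt dv x = -1
  · rw [if_pos h]
  · rw [if_neg h]
    by_contra hne
    obtain ⟨i, a, b, rfl, rfl, hb⟩ := D_entry dv hk hdv (Ne.symm hne)
    rw [wt_sameblock] at h
    omega

lemma E_mem_Upp0 (hk : 0 < k) (hdv : ∀ i, 0 < dv i)
    {A : Matrix (Fin (dtot dv)) (Fin (dtot dv)) F} (hA : IsEShaped dv A) :
    A ∈ (Upp dv 0 : Submodule F _) := by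
  intro x y hxy
  by_contra hne
  obtain ⟨i, j, a, b, rfl, rfl, hij⟩ := E_entry dv hk hdv hA hne
  rw [emb_val, emb_val, off_succ dv hij] at hxy
  have := a.isLt
  omega

lemma E_mem_Fil0 (hk : 0 < k) (hdv : ∀ i, 0 < dv i)
    {A : Matrix (Fin (dtot dv)) (Fin (dtot dv)) F} (hA : IsEShaped dv A) :
    A ∈ (Fil dv 0 : Submodule F _) := by
  intro x y hxy
  by_contra hne
  obtain ⟨i, j, a, b, rfl, rfl, hij⟩ := E_entry dv hk hdv hA hne
  rw [wt_superdiag dv hij] at hxy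
  have h1 : ((a : ℕ) : ℤ) < (dv i : ℤ) := by exact_mod_cast a.isLt
  have h2 : (0 : ℤ) ≤ ((b : ℕ) : ℤ) := by positivity
  omega

lemma CanE_mem_Upp0 (hdv : ∀ i, 0 < dv i) :
    CanE F dv ∈ (Upp dv 0 : Submodule F _) := by
  intro x y hxy
  rw [CanE, Matrix.of_apply, if_neg]
  rintro ⟨i, j, hji, hx, hy⟩
  rw [off_succ dv hji] at hy
  have := hdv i
  omega

lemma CanE_apply (hdv : ∀ i, 0 < dv i) (i j : Fin k) (a : Fin (dv i)) (b : Fin (dv j)) :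
    CanE F dv (emb dv i a) (emb dv j b) =
      if (j : ℕ) = (i : ℕ) + 1 ∧ (a : ℕ) = dv i - 1 ∧ (b : ℕ) = 0 then 1 else 0 := by
  rw [CanE, Matrix.of_apply]
  by_cases h : (j : ℕ) = (i : ℕ) + 1 ∧ (a : ℕ) = dv i - 1 ∧ (b : ℕ) = 0
  · rw [if_pos h, if_pos]
    exact ⟨i, j, h.1, by rw [emb_val]; omega, by rw [emb_val]; omega⟩
  · rw [if_neg h, if_neg]
    rintro ⟨i', j', hj', hx, hy⟩
    apply h
    have hxe : emb dv i a = emb dv i' ⟨dv i' - 1, Nat.sub_lt (hdv i') one_pos⟩ := by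
      apply Fin.ext
      rw [emb_val, emb_val]
      rw [emb_val] at hx
      exact hx
    have hye : emb dv j b = emb dv j' ⟨0, hdv j'⟩ := by
      apply Fin.ext
      rw [emb_val, emb_val]
      rw [emb_val] at hy
      have h0 : ((⟨0, hdv j'⟩ : Fin (dv j')) : ℕ) = 0 := rfl
      omega
    have hii := emb_block_eq dv hxe
    have hjj := emb_block_eq dv hye
    subst hii
    subst hjj
    have h1 : (a : ℕ) = dv i - 1 := congrArg Fin.val (emb_right_inj dv hxe)
    have h2 : (b : ℕ) = 0 := congrArg Fin.val (emb_right_inj dv hye)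
    exact ⟨hj', h1, h2⟩

lemma gen_mem_Upp0 (hk : 0 < k) (hdv : ∀ i, 0 < dv i)
    {B : Matrix (Fin (dtot dv)) (Fin (dtot dv)) F} (hB : B ∈ (Upp dv 0 : Submodule F _)) :
    ∀ l : ℕ, (fun Y => ⁅Dmat dv (0 : F) 0, Y⁆)^[l] B ∈ (Upp dv 0 : Submodule F _) := by
  intro l
  induction l with
  | zero => exact hB
  | succ n ih =>
    rw [Function.iterate_succ_apply']
    exact Upp_anti dv (by omega) (Upp_lie dv (D_mem_Upp0 dv hk hdv) ih)

lemma gen_mem_Fil (hk : 0 < k) (hdv : ∀ i, 0 < dv i)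
    {B : Matrix (Fin (dtot dv)) (Fin (dtot dv)) F} (hB : B ∈ (Fil dv 0 : Submodule F _)) :
    ∀ l : ℕ, (fun Y => ⁅Dmat dv (0 : F) 0, Y⁆)^[l] B ∈ (Fil dv (-(l : ℤ)) : Submodule F _) ∧
      pj dv (-(l : ℤ)) ((fun Y => ⁅Dmat dv (0 : F) 0, Y⁆)^[l] B) =
        (fun Y => ⁅Dmat dv (0 : F) 0, Y⁆)^[l] (pj dv 0 B) := by
  intro l
  induction l with
  | zero =>
    refine ⟨by simpa using hB, ?_⟩
    simp only [Nat.cast_zero, neg_zero, Function.iterate_zero, id_eq]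
  | succ n ih =>
    have hcast : (-(((n : ℕ) + 1 : ℕ) : ℤ)) = -1 + -(n : ℤ) := by push_cast; ring
    constructor
    · rw [Function.iterate_succ_apply', hcast]
      exact Fil_lie dv (D_mem_Fil dv hk hdv) ih.1
    · rw [Function.iterate_succ_apply', Function.iterate_succ_apply', hcast]
      rw [pj_lie dv (D_mem_Fil dv hk hdv) ih.1, pj_D dv hk hdv, ih.2]

end Dev4
section Dev5

variable {F : Type*} [Field F] {L : Type*} [LieRing L] [LieAlgebra F L]

/-- Ambient version of the lower central series of a Lie subalgebra. -/
def lcsAmb (K : LieSubalgebra F L) : ℕ → Submodule F L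
  | 0 => K.toSubmodule
  | m + 1 => Submodule.span F {z | ∃ x ∈ K, ∃ y ∈ lcsAmb K m, z = ⁅x, y⁆}

lemma lcsAmb_eq_map (K : LieSubalgebra F L) (m : ℕ) :
    lcsAmb K m =
      (LieModule.lowerCentralSeries F ↥K ↥K m).toSubmodule.map K.toSubmodule.subtype := by
  induction m with
  | zero =>
    rw [lcsAmb, LieModule.lowerCentralSeries_zero, LieSubmodule.top_toSubmodule,
      Submodule.map_top, Submodule.range_subtype]
  | succ n ih =>
    rw [lcsAmb, LieModule.lowerCentralSeries_succ, LieSubmodule.lieIdeal_oper_eq_linear_span',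
      Submodule.map_span]
    congr 1
    ext z
    constructor
    · rintro ⟨x, hx, y, hy, rfl⟩
      rw [ih] at hy
      obtain ⟨y', hy', rfl⟩ := hy
      exact ⟨⁅(⟨x, hx⟩ : ↥K), y'⁆, ⟨⟨x, hx⟩, trivial, y', hy', rfl⟩, rfl⟩
    · rintro ⟨w, ⟨x, -, y, hy, hw⟩, rfl⟩
      refine ⟨(x : ↥K), x.2, (y : L), ?_, ?_⟩
      · rw [ih]
        exact ⟨y, hy, rfl⟩
      · rw [← hw]
        rfl

lemma lcs_bot_iff (K : LieSubalgebra F L) (m : ℕ) :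
    LieModule.lowerCentralSeries F ↥K ↥K m = ⊥ ↔ lcsAmb K m = ⊥ := by
  rw [lcsAmb_eq_map]
  constructor
  · intro h
    rw [h]
    simp
  · intro h
    rw [LieSubmodule.eq_bot_iff]
    intro x hx
    have hmem : K.toSubmodule.subtype x ∈
        (LieModule.lowerCentralSeries F ↥K ↥K m).toSubmodule.map K.toSubmodule.subtype :=
      ⟨x, hx, rfl⟩
    rw [h, Submodule.mem_bot] at hmem
    exact Subtype.ext hmem

lemma nilDeg_eq_lcsAmb (K : LieSubalgebra F L) :
    nilDeg F ↥K = sInf {m | lcsAmb K m = ⊥} := by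
  unfold nilDeg
  congr 1
  ext m
  exact lcs_bot_iff K m

lemma span_lie_span {s t : Set L} {p : Submodule F L}
    (h : ∀ a ∈ s, ∀ b ∈ t, ⁅a, b⁆ ∈ p) :
    ∀ x ∈ Submodule.span F s, ∀ y ∈ Submodule.span F t, ⁅x, y⁆ ∈ p := by
  intro x hx
  induction hx using Submodule.span_induction with
  | mem a ha =>
    intro y hy
    induction hy using Submodule.span_induction with
    | mem b hb => exact h a ha b hb
    | zero => simpa using p.zero_mem
    | add y1 y2 _ _ ih1 ih2 => rw [lie_add]; exact p.add_mem ih1 ih2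
    | smul c y1 _ ih => rw [lie_smul]; exact p.smul_mem c ih
  | zero => intro y hy; simpa using p.zero_mem
  | add x1 x2 _ _ ih1 ih2 => intro y hy; rw [add_lie]; exact p.add_mem (ih1 y hy) (ih2 y hy)
  | smul c x1 _ ih => intro y hy; rw [smul_lie]; exact p.smul_mem c (ih y hy)

end Dev5
section Dev6

variable {F : Type*} [Field F] {k : ℕ} (dv : Fin k → ℕ)

/-- The Lie subalgebra of strictly upper triangular matrices. -/
def UppAlg : LieSubalgebra F (Matrix (Fin (dtot dv)) (Fin (dtot dv)) F) :=
  { Upp dv 0 with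
    lie_mem' := fun {x y} hx hy => Upp_anti dv (Nat.zero_le 1) (Upp_lie dv hx hy) }

lemma nAlg_le_Upp (hk : 0 < k) (hdv : ∀ i, 0 < dv i)
    {B : Matrix (Fin (dtot dv)) (Fin (dtot dv)) F} (hB : B ∈ (Upp dv 0 : Submodule F _)) :
    (nAlg F dv B).toSubmodule ≤ (Upp dv 0 : Submodule F _) := by
  have h : nAlg F dv B ≤ UppAlg dv := by
    apply LieSubalgebra.lieSpan_le.mpr
    rintro X ⟨l, rfl⟩
    exact gen_mem_Upp0 dv hk hdv hB l
  exact fun x hx => h hx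

lemma lcsAmb_le_Upp (K : LieSubalgebra F (Matrix (Fin (dtot dv)) (Fin (dtot dv)) F))
    (hK : K.toSubmodule ≤ (Upp dv 0 : Submodule F _)) :
    ∀ m, lcsAmb K m ≤ (Upp dv m : Submodule F _) := by
  intro m
  induction m with
  | zero => exact hK
  | succ n ih =>
    rw [lcsAmb]
    apply Submodule.span_le.mpr
    rintro z ⟨x, hx, y, hy, rfl⟩
    exact Upp_lie dv (hK hx) (ih hy)

lemma dtot_pos (hk : 0 < k) (hdv : ∀ i, 0 < dv i) : 0 < dtot dv := by
  rw [dtot]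
  exact Finset.sum_pos (fun i _ => hdv i) ⟨⟨0, hk⟩, Finset.mem_univ _⟩

lemma lcsAmb_nAlg_bot (hk : 0 < k) (hdv : ∀ i, 0 < dv i)
    {B : Matrix (Fin (dtot dv)) (Fin (dtot dv)) F} (hB : B ∈ (Upp dv 0 : Submodule F _)) :
    lcsAmb (nAlg F dv B) (dtot dv - 1) = ⊥ := by
  apply le_bot_iff.mp
  refine le_trans (lcsAmb_le_Upp dv _ (nAlg_le_Upp dv hk hdv hB) _) ?_
  rw [Upp_bot dv (dtot_pos dv hk hdv)]

lemma nAlg_nilpotent (hk : 0 < k) (hdv : ∀ i, 0 < dv i)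
    {B : Matrix (Fin (dtot dv)) (Fin (dtot dv)) F} (hB : B ∈ (Upp dv 0 : Submodule F _)) :
    LieRing.IsNilpotent ↥(nAlg F dv B) :=
  (LieModule.isNilpotent_iff F _ _).mpr ⟨dtot dv - 1, (lcs_bot_iff _ _).mpr (lcsAmb_nAlg_bot dv hk hdv hB)⟩

end Dev6

section Dev7

variable {F : Type*} [Field F] {k : ℕ} (dv : Fin k → ℕ)

/-- The set of top-degree parts of filtered elements of the `m`-th ambient lcs of `n(A)`. -/
def grS (A : Matrix (Fin (dtot dv)) (Fin (dtot dv)) F) (m : ℕ) :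
    Set (Matrix (Fin (dtot dv)) (Fin (dtot dv)) F) :=
  {Z | ∃ c : ℤ, ∃ X, X ∈ lcsAmb (nAlg F dv A) m ∧ X ∈ (Fil dv c : Submodule F _) ∧
    Z = pj dv c X}

lemma grS_lie0 (A : Matrix (Fin (dtot dv)) (Fin (dtot dv)) F) :
    ∀ a ∈ grS dv A 0, ∀ b ∈ grS dv A 0, ⁅a, b⁆ ∈ Submodule.span F (grS dv A 0) := by
  rintro a ⟨c, X, hX, hXF, rfl⟩ b ⟨c', X', hX', hX'F, rfl⟩
  apply Submodule.subset_span
  refine ⟨c + c', ⁅X, X'⁆, ?_, Fil_lie dv hXF hX'F, (pj_lie dv hXF hX'F).symm⟩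
  rw [lcsAmb] at hX hX' ⊢
  exact (nAlg F dv A).lie_mem hX hX'

lemma grS_lie_succ (A : Matrix (Fin (dtot dv)) (Fin (dtot dv)) F) (m : ℕ) :
    ∀ a ∈ grS dv A 0, ∀ b ∈ grS dv A m, ⁅a, b⁆ ∈ Submodule.span F (grS dv A (m + 1)) := by
  rintro a ⟨c, X, hX, hXF, rfl⟩ b ⟨c', X', hX', hX'F, rfl⟩
  apply Submodule.subset_span
  refine ⟨c + c', ⁅X, X'⁆, ?_, Fil_lie dv hXF hX'F, (pj_lie dv hXF hX'F).symm⟩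
  rw [lcsAmb]
  apply Submodule.subset_span
  rw [lcsAmb] at hX
  exact ⟨X, hX, X', hX', rfl⟩

lemma gr_zero (hk : 0 < k) (hdv : ∀ i, 0 < dv i)
    {A : Matrix (Fin (dtot dv)) (Fin (dtot dv)) F} (hA0 : A ∈ (Fil dv 0 : Submodule F _)) :
    (nAlg F dv (pj dv 0 A)).toSubmodule ≤ Submodule.span F (grS dv A 0) := by
  set K0 : LieSubalgebra F (Matrix (Fin (dtot dv)) (Fin (dtot dv)) F) :=
    { toSubmodule := Submodule.span F (grS dv A 0),
      lie_mem' := fun {x y} hx hy => span_lie_span (grS_lie0 dv A) x hx y hy } with hK0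
  have h : nAlg F dv (pj dv 0 A) ≤ K0 := by
    apply LieSubalgebra.lieSpan_le.mpr
    rintro X ⟨l, rfl⟩
    apply Submodule.subset_span
    refine ⟨-(l : ℤ), (fun Y => ⁅Dmat dv (0 : F) 0, Y⁆)^[l] A, ?_,
      (gen_mem_Fil dv hk hdv hA0 l).1, ((gen_mem_Fil dv hk hdv hA0 l).2).symm⟩
    rw [lcsAmb]
    exact LieSubalgebra.subset_lieSpan ⟨l, rfl⟩
  exact fun x hx => h hx

lemma gr_main (hk : 0 < k) (hdv : ∀ i, 0 < dv i)
    {A : Matrix (Fin (dtot dv)) (Fin (dtot dv)) F} (hA0 : A ∈ (Fil dv 0 : Submodule F _)) :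
    ∀ m, lcsAmb (nAlg F dv (pj dv 0 A)) m ≤ Submodule.span F (grS dv A m) := by
  intro m
  induction m with
  | zero => exact gr_zero dv hk hdv hA0
  | succ n ih =>
    rw [lcsAmb]
    apply Submodule.span_le.mpr
    rintro z ⟨x, hx, y, hy, rfl⟩
    exact span_lie_span (grS_lie_succ dv A n) x (gr_zero dv hk hdv hA0 hx) y (ih hy)

lemma gr_bot (hk : 0 < k) (hdv : ∀ i, 0 < dv i)
    {A : Matrix (Fin (dtot dv)) (Fin (dtot dv)) F} (hA0 : A ∈ (Fil dv 0 : Submodule F _))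
    {m : ℕ} (h : lcsAmb (nAlg F dv A) m = ⊥) :
    lcsAmb (nAlg F dv (pj dv 0 A)) m = ⊥ := by
  apply le_bot_iff.mp
  refine le_trans (gr_main dv hk hdv hA0 m) ?_
  apply Submodule.span_le.mpr
  rintro z ⟨c, X, hX, -, rfl⟩
  rw [h, Submodule.mem_bot] at hX
  subst hX
  rw [pj_zero]
  exact Submodule.zero_mem _

end Dev7
section Dev8

variable {F : Type*} [Field F] {k : ℕ} (dv : Fin k → ℕ)

/-- Conjugation by the diagonal matrix with entries `f`. -/
def conjM (f : Fin (dtot dv) → F) (X : Matrix (Fin (dtot dv)) (Fin (dtot dv)) F) :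
    Matrix (Fin (dtot dv)) (Fin (dtot dv)) F :=
  Matrix.of fun x y => f x * X x y * (f y)⁻¹

lemma conjM_apply (f : Fin (dtot dv) → F) (X : Matrix (Fin (dtot dv)) (Fin (dtot dv)) F)
    (x y : Fin (dtot dv)) : conjM dv f X x y = f x * X x y * (f y)⁻¹ := rfl

lemma conjM_add (f : Fin (dtot dv) → F) (X Y : Matrix (Fin (dtot dv)) (Fin (dtot dv)) F) :
    conjM dv f (X + Y) = conjM dv f X + conjM dv f Y := by
  ext x y
  simp only [conjM_apply, Matrix.add_apply]
  ring

lemma conjM_sub (f : Fin (dtot dv) → F) (X Y : Matrix (Fin (dtot dv)) (Fin (dtot dv)) F) :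
    conjM dv f (X - Y) = conjM dv f X - conjM dv f Y := by
  ext x y
  simp only [conjM_apply, Matrix.sub_apply]
  ring

lemma conjM_smul (f : Fin (dtot dv) → F) (c : F)
    (X : Matrix (Fin (dtot dv)) (Fin (dtot dv)) F) :
    conjM dv f (c • X) = c • conjM dv f X := by
  ext x y
  simp only [conjM_apply, Matrix.smul_apply, smul_eq_mul]
  ring

lemma conjM_mul {f : Fin (dtot dv) → F} (hf : ∀ x, f x ≠ 0)
    (X Y : Matrix (Fin (dtot dv)) (Fin (dtot dv)) F) :
    conjM dv f (X * Y) = conjM dv f X * conjM dv f Y := by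
  ext x y
  rw [conjM_apply, Matrix.mul_apply, Matrix.mul_apply, Finset.mul_sum, Finset.sum_mul]
  apply Finset.sum_congr rfl
  intro t _
  rw [conjM_apply, conjM_apply,
    show f x * X x t * (f t)⁻¹ * (f t * Y t y * (f y)⁻¹)
      = f x * X x t * Y t y * (f y)⁻¹ * ((f t)⁻¹ * f t) by ring,
    inv_mul_cancel₀ (hf t), mul_one]
  ring

lemma conjM_lie {f : Fin (dtot dv) → F} (hf : ∀ x, f x ≠ 0)
    (X Y : Matrix (Fin (dtot dv)) (Fin (dtot dv)) F) :
    conjM dv f ⁅X, Y⁆ = ⁅conjM dv f X, conjM dv f Y⁆ := by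
  rw [Ring.lie_def, Ring.lie_def, conjM_sub, conjM_mul dv hf, conjM_mul dv hf]

/-- `conjM` as a linear map. -/
def conjL (f : Fin (dtot dv) → F) :
    Matrix (Fin (dtot dv)) (Fin (dtot dv)) F →ₗ[F] Matrix (Fin (dtot dv)) (Fin (dtot dv)) F where
  toFun := conjM dv f
  map_add' := conjM_add dv f
  map_smul' := conjM_smul dv f

lemma conjM_D (hk : 0 < k) (hdv : ∀ i, 0 < dv i) {f : Fin (dtot dv) → F}
    (hf : ∀ x, f x ≠ 0) (hf2 : ∀ x y, Dmat dv (0 : F) 0 x y ≠ 0 → f x = f y) :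
    conjM dv f (Dmat dv (0 : F) 0) = Dmat dv (0 : F) 0 := by
  ext x y
  rw [conjM_apply]
  by_cases h : Dmat dv (0 : F) 0 x y = 0
  · rw [h, mul_zero, zero_mul]
  · rw [← hf2 x y h, mul_comm (f x) (Dmat dv (0 : F) 0 x y), mul_assoc,
      mul_inv_cancel₀ (hf x), mul_one]

lemma lcsAmb_conj_le {f : Fin (dtot dv) → F} (hf : ∀ x, f x ≠ 0)
    (A' B : Matrix (Fin (dtot dv)) (Fin (dtot dv)) F)
    (hgen : ∀ l : ℕ, (fun Y => ⁅Dmat dv (0 : F) 0, Y⁆)^[l] B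
      = conjM dv f ((fun Y => ⁅Dmat dv (0 : F) 0, Y⁆)^[l] A')) :
    ∀ m, lcsAmb (nAlg F dv B) m ≤ (lcsAmb (nAlg F dv A') m).map (conjL dv f) := by
  have hbase : (nAlg F dv B).toSubmodule ≤ (nAlg F dv A').toSubmodule.map (conjL dv f) := by
    set K0 : LieSubalgebra F (Matrix (Fin (dtot dv)) (Fin (dtot dv)) F) :=
      { toSubmodule := (nAlg F dv A').toSubmodule.map (conjL dv f),
        lie_mem' := by
          rintro x y ⟨x', hx', rfl⟩ ⟨y', hy', rfl⟩
          exact ⟨⁅x', y'⁆, (nAlg F dv A').lie_mem hx' hy', conjM_lie dv hf x' y'⟩ } with hK0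
    have h : nAlg F dv B ≤ K0 := by
      apply LieSubalgebra.lieSpan_le.mpr
      rintro X ⟨l, rfl⟩
      exact ⟨(fun Y => ⁅Dmat dv (0 : F) 0, Y⁆)^[l] A',
        LieSubalgebra.subset_lieSpan ⟨l, rfl⟩, (hgen l).symm⟩
    exact fun x hx => h hx
  intro m
  induction m with
  | zero => exact hbase
  | succ n ih =>
    rw [lcsAmb]
    apply Submodule.span_le.mpr
    rintro z ⟨x, hx, y, hy, rfl⟩
    obtain ⟨x', hx', rfl⟩ := hbase hx
    obtain ⟨y', hy', rfl⟩ := ih hy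
    refine ⟨⁅x', y'⁆, ?_, conjM_lie dv hf x' y'⟩
    rw [lcsAmb]
    exact Submodule.subset_span ⟨x', hx', y', hy', rfl⟩

lemma lcsAmb_conj_bot {f : Fin (dtot dv) → F} (hf : ∀ x, f x ≠ 0)
    {A' B : Matrix (Fin (dtot dv)) (Fin (dtot dv)) F}
    (hgen : ∀ l : ℕ, (fun Y => ⁅Dmat dv (0 : F) 0, Y⁆)^[l] B
      = conjM dv f ((fun Y => ⁅Dmat dv (0 : F) 0, Y⁆)^[l] A'))
    {m : ℕ} (h : lcsAmb (nAlg F dv A') m = ⊥) : lcsAmb (nAlg F dv B) m = ⊥ := by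
  apply le_bot_iff.mp
  refine le_trans (lcsAmb_conj_le dv hf A' B hgen m) ?_
  rw [h, Submodule.map_bot]

end Dev8
section Dev9

variable {F : Type*} [Field F] {k : ℕ} (dv : Fin k → ℕ)

/-- The corner entry of the `(n, n+1)` block of `A` (or `1` out of range). -/
def cornerVal (A : Matrix (Fin (dtot dv)) (Fin (dtot dv)) F) (hdv : ∀ i, 0 < dv i) (n : ℕ) :
    F :=
  if h : n + 1 < k then
    A (emb dv ⟨n, Nat.lt_of_succ_lt h⟩
        ⟨dv ⟨n, Nat.lt_of_succ_lt h⟩ - 1, Nat.sub_lt (hdv _) one_pos⟩)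
      (emb dv ⟨n + 1, h⟩ ⟨0, hdv _⟩)
  else 1

lemma cornerVal_eq (A : Matrix (Fin (dtot dv)) (Fin (dtot dv)) F) (hdv : ∀ i, 0 < dv i)
    {i j : Fin k} (hij : (j : ℕ) = (i : ℕ) + 1) (hr : dv i - 1 < dv i) (hs : 0 < dv j) :
    cornerVal dv A hdv (i : ℕ) = A (emb dv i ⟨dv i - 1, hr⟩) (emb dv j ⟨0, hs⟩) := by
  have hlt : (i : ℕ) + 1 < k := by rw [← hij]; exact j.isLt
  rw [cornerVal, dif_pos hlt]
  have hj : (⟨(i : ℕ) + 1, hlt⟩ : Fin k) = j := Fin.ext hij.symm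
  congr 1
  apply Fin.ext
  show off dv (⟨(i : ℕ) + 1, hlt⟩ : Fin k) + 0 = off dv j + 0
  rw [hj]

lemma cornerVal_ne {A : Matrix (Fin (dtot dv)) (Fin (dtot dv)) F} (hA : IsEShaped dv A)
    (hdv : ∀ i, 0 < dv i) (n : ℕ) : cornerVal dv A hdv n ≠ 0 := by
  rw [cornerVal]
  split
  · next h =>
    exact hA.2 ⟨n, Nat.lt_of_succ_lt h⟩ ⟨n + 1, h⟩ rfl _ _
  · exact one_ne_zero

/-- The cumulative products of corner values. -/
def useq (A : Matrix (Fin (dtot dv)) (Fin (dtot dv)) F) (hdv : ∀ i, 0 < dv i) : ℕ → F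
  | 0 => 1
  | n + 1 => useq A hdv n * cornerVal dv A hdv n

lemma useq_ne {A : Matrix (Fin (dtot dv)) (Fin (dtot dv)) F} (hA : IsEShaped dv A)
    (hdv : ∀ i, 0 < dv i) : ∀ n, useq dv A hdv n ≠ 0
  | 0 => one_ne_zero
  | n + 1 => mul_ne_zero (useq_ne hA hdv n) (cornerVal_ne dv hA hdv n)

lemma conj_corner (hk : 0 < k) (hdv : ∀ i, 0 < dv i)
    {A : Matrix (Fin (dtot dv)) (Fin (dtot dv)) F} (hA : IsEShaped dv A) :
    CanE F dv = conjM dv (fun x => useq dv A hdv (bidx dv (x : ℕ))) (pj dv 0 A) := by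
  ext x y
  obtain ⟨i, a, rfl⟩ := exists_emb dv hk hdv x
  obtain ⟨j, b, rfl⟩ := exists_emb dv hk hdv y
  rw [CanE_apply dv hdv]
  simp only [conjM_apply, bidx_emb, pj_apply]
  by_cases hij : (j : ℕ) = (i : ℕ) + 1
  · by_cases hcor : (a : ℕ) = dv i - 1 ∧ (b : ℕ) = 0
    · have hwt : wt dv (emb dv j b) - wt dv (emb dv i a) = 0 := by
        rw [wt_superdiag dv hij]
        have h1 := hcor.1
        have h2 := hcor.2
        have h3 := hdv i
        have h4 := a.isLt
        omega
      rw [if_pos ⟨hij, hcor.1, hcor.2⟩, if_pos hwt]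
      have ha' : a = ⟨dv i - 1, Nat.sub_lt (hdv i) one_pos⟩ := Fin.ext hcor.1
      have hb' : b = ⟨0, hdv j⟩ := Fin.ext hcor.2
      rw [ha', hb', ← cornerVal_eq dv A hdv hij _ _, hij]
      rw [show useq dv A hdv ((i : ℕ) + 1) = useq dv A hdv (i : ℕ) * cornerVal dv A hdv (i : ℕ)
        from rfl]
      exact (mul_inv_cancel₀ (mul_ne_zero (useq_ne dv hA hdv _) (cornerVal_ne dv hA hdv _))).symm
    · have hwt : ¬ (wt dv (emb dv j b) - wt dv (emb dv i a) = 0) := by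
        rw [wt_superdiag dv hij]
        intro heq
        have h3 := hdv i
        have h4 := a.isLt
        apply hcor
        constructor <;> omega
      rw [if_neg (fun hcon => hcor ⟨hcon.2.1, hcon.2.2⟩), if_neg hwt, mul_zero, zero_mul]
  · rw [if_neg (fun hcon => hij hcon.1)]
    have hz : A (emb dv i a) (emb dv j b) = 0 := by
      calc A (emb dv i a) (emb dv j b) = blk dv i j A a b := rfl
        _ = 0 := by rw [hA.1 i j hij]; rfl
    rw [hz, ite_self, mul_zero, zero_mul]

lemma hgen_corner (hk : 0 < k) (hdv : ∀ i, 0 < dv i)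
    {A : Matrix (Fin (dtot dv)) (Fin (dtot dv)) F} (hA : IsEShaped dv A) :
    ∀ l : ℕ, (fun Y => ⁅Dmat dv (0 : F) 0, Y⁆)^[l] (CanE F dv)
      = conjM dv (fun x => useq dv A hdv (bidx dv (x : ℕ)))
          ((fun Y => ⁅Dmat dv (0 : F) 0, Y⁆)^[l] (pj dv 0 A)) := by
  have hf : ∀ x : Fin (dtot dv), (fun x : Fin (dtot dv) => useq dv A hdv (bidx dv (x : ℕ))) x ≠ 0 :=
    fun x => useq_ne dv hA hdv _
  have hf2 : ∀ x y, Dmat dv (0 : F) 0 x y ≠ 0 →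
      (fun x : Fin (dtot dv) => useq dv A hdv (bidx dv (x : ℕ))) x
        = (fun x : Fin (dtot dv) => useq dv A hdv (bidx dv (x : ℕ))) y := by
    intro x y h
    obtain ⟨i, a, b, rfl, rfl, -⟩ := D_entry dv hk hdv h
    simp only [bidx_emb]
  intro l
  induction l with
  | zero => exact conj_corner dv hk hdv hA
  | succ n ih =>
    rw [Function.iterate_succ_apply', Function.iterate_succ_apply', conjM_lie dv hf,
      conjM_D dv hk hdv hf hf2, ih]

end Dev9
/-- Proposition `prop.struture`, part (5):  `n(S)` and `n(C)` are nilpotent and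
the nilpotency degree of `n(S)` is at least that of `n(C)`. -/
theorem statement4 {F : Type*} [Field F] [CharZero F] {k : ℕ} (hk : 2 ≤ k)
    (dv : Fin k → ℕ) (hdv : ∀ i, 0 < dv i)
    (A : Matrix (Fin (dtot dv)) (Fin (dtot dv)) F) (hA : IsEShaped dv A) :
    LieRing.IsNilpotent ↥(nAlg F dv A) ∧
    LieRing.IsNilpotent ↥(nAlg F dv (CanE F dv)) ∧
    nilDeg F ↥(nAlg F dv (CanE F dv)) ≤ nilDeg F ↥(nAlg F dv A) := by
  have hk0 : 0 < k := by omega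
  have hAU := E_mem_Upp0 dv hk0 hdv hA
  have hCU : CanE F dv ∈ (Upp dv 0 : Submodule F _) := CanE_mem_Upp0 dv hdv
  refine ⟨nAlg_nilpotent dv hk0 hdv hAU, nAlg_nilpotent dv hk0 hdv hCU, ?_⟩
  rw [nilDeg_eq_lcsAmb, nilDeg_eq_lcsAmb]
  have hsub : {m | lcsAmb (nAlg F dv A) m = ⊥}
      ⊆ {m | lcsAmb (nAlg F dv (CanE F dv)) m = ⊥} := by
    intro m hm
    exact lcsAmb_conj_bot dv (fun x => useq_ne dv hA hdv _) (hgen_corner dv hk0 hdv hA)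
      (gr_bot dv hk0 hdv (E_mem_Fil0 dv hk0 hdv hA) hm)
  have hne : {m | lcsAmb (nAlg F dv A) m = ⊥}.Nonempty :=
    ⟨dtot dv - 1, lcsAmb_nAlg_bot dv hk0 hdv hAU⟩
  exact Nat.sInf_le (hsub (Nat.sInf_mem hne))

end Paper
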